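/- Assume n ≤ ⌊n'/2⌋. Then for every Λ ∈ S_{n,δ}, θ̄(Λ) is defined and θ̄(Λ) = θ_0(Λ). -/

import Mathlib

namespace PanUnitary

/-- `part μ i` : the `i`-th largest element (0-indexed) of the multiset `μ`, `0` beyond.
Viewing a multiset of naturals as a partition (identified up to trailing zeros),
this is the `(i+1)`-st part. -/
def part (μ : Multiset ℕ) (i : ℕ) : ℕ := ((μ.sort (· ≤ ·)).reverse).getD i 0

/-- Remove the zero parts: the canonical (zero-free) representative of a partition. -/
def strip (μ : Multiset ℕ) : Multiset ℕ := μ.filter (fun x => 0 < x)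

/-- `transpose μ j` is the `(j+1)`-st part of the transposed (conjugate) partition. -/
def transpose (μ : Multiset ℕ) (j : ℕ) : ℕ := (μ.filter (fun x => j < x)).card

/-- `Preceq f g` : the partition whose parts are given by `f` is `⪯` the one given by `g`,
i.e. `g i - 1 ≤ f i ≤ g i` for all `i`. -/
def Preceq (f g : ℕ → ℕ) : Prop := ∀ i, g i ≤ f i + 1 ∧ f i ≤ g i

/-- An integer `δ` is admissible if it is even and nonnegative, or odd and negative. -/
def IsAdmissible (δ : ℤ) : Prop := (Even δ ∧ 0 ≤ δ) ∨ (Odd δ ∧ δ < 0)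

/-- `ε = 1` if `δ` is even, `ε = 0` if `δ` is odd. -/
def eps (δ : ℤ) : ℕ := if Even δ then 1 else 0

/-- `d (d + 1) / 2` where `d = |δ|`. -/
def halfTri (δ : ℤ) : ℕ := δ.natAbs * (δ.natAbs + 1) / 2

/-- A symbol: a pair of rows of natural numbers (the strict-decrease condition is
part of the predicate `Symbol.IsUnitary`). -/
structure Symbol where
  A : List ℕ
  B : List ℕ

def Symbol.defect (Λ : Symbol) : ℤ := (Λ.A.length : ℤ) - (Λ.B.length : ℤ)

/-- The row `(a_1, …, a_m)` gives the partition with parts `(a_i - e)/2 - (m - i)`. -/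
def upsRow (L : List ℕ) (e : ℕ) : Multiset ℕ :=
  ((L.mapIdx fun i a => (a - e) / 2 - (L.length - 1 - i) : List ℕ) : Multiset ℕ)

/-- The bipartition `Υ(Λ)` (canonical zero-free representatives). -/
def Symbol.Upsilon (Λ : Symbol) : Multiset ℕ × Multiset ℕ :=
  (strip (upsRow Λ.A (eps Λ.defect)), strip (upsRow Λ.B (1 - eps Λ.defect)))

/-- `Λ` is a unitary-type symbol of (admissible) defect `δ`. -/
def Symbol.IsUnitary (Λ : Symbol) (δ : ℤ) : Prop :=
  Λ.A.Pairwise (· > ·) ∧ Λ.B.Pairwise (· > ·) ∧ Λ.defect = δ ∧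
    (∀ a ∈ Λ.A, a % 2 = eps δ) ∧ (∀ b ∈ Λ.B, b % 2 = 1 - eps δ)

/-- The rank `2(|μ| + |ν|) + d(d+1)/2` of a unitary-type symbol. -/
def Symbol.rank (Λ : Symbol) : ℕ :=
  2 * (Λ.Upsilon.1.sum + Λ.Upsilon.2.sum) + halfTri Λ.defect

/-- Equivalence of symbols: same defect and same `Υ`. -/
def Symbol.Equiv (Λ Λ' : Symbol) : Prop :=
  Λ.defect = Λ'.defect ∧ Λ.Upsilon = Λ'.Upsilon

/-- Membership in `S_{n,δ}`: a unitary-type symbol of admissible defect `δ` and rank `n`. -/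
def InS (n : ℕ) (δ : ℤ) (Λ : Symbol) : Prop :=
  IsAdmissible δ ∧ Λ.IsUnitary δ ∧ Λ.rank = n

/-- `Σ min(x,y)` over all unordered pairs of (positions of) entries of the list. -/
def pairMinSum : List ℕ → ℕ
  | [] => 0
  | x :: xs => (xs.map (fun y => min x y)).sum + pairMinSum xs

/-- All entries of a symbol (both rows). -/
def Symbol.entries (Λ : Symbol) : List ℕ := Λ.A ++ Λ.B

/-- `ord(Λ) = Σ min(x,y) − Σ_{i=1}^{⌊N/2⌋} (N − 2i)²`. -/
def Symbol.ord (Λ : Symbol) : ℤ :=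
  (pairMinSum Λ.entries : ℤ) -
    ∑ i ∈ Finset.Icc 1 (Λ.entries.length / 2),
      ((Λ.entries.length : ℤ) - 2 * (i : ℤ)) ^ 2

/-- The shift of a unitary-type symbol. -/
def Symbol.shift (Λ : Symbol) : Symbol :=
  ⟨Λ.A.map (fun a => a + 2) ++ [eps Λ.defect],
   Λ.B.map (fun b => b + 2) ++ [1 - eps Λ.defect]⟩

/-- The defect `δ'` for the second member of the dual pair. -/
def deltaPrime (n n' : ℕ) (δ : ℤ) : ℤ :=
  if Even (n + n') then (if δ = 0 then 0 else -δ + 1) else -δ - 1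

/-- `τ = ((n' − d'(d'+1)/2) − (n − d(d+1)/2)) / 2`. -/
def tau (n n' : ℕ) (δ : ℤ) : ℚ :=
  (((n' : ℚ) - (halfTri (deltaPrime n n' δ) : ℚ)) - ((n : ℚ) - (halfTri δ : ℚ))) / 2

/-- `τ` as a natural number (equal to `τ` whenever `τ` is a nonnegative integer). -/
def tauNat (n n' : ℕ) (δ : ℤ) : ℕ :=
  ((n' + halfTri δ) - (n + halfTri (deltaPrime n n' δ))) / 2

/-- The set of (canonical, zero-free) bipartitions `(μ;ν)` with
`2(|μ|+|ν|) + d(d+1)/2 = n`; equivalently `|μ|+|ν| = (n − d(d+1)/2)/2`. -/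
def BipSet (n : ℕ) (δ : ℤ) : Set (Multiset ℕ × Multiset ℕ) :=
  {p | (∀ x ∈ p.1, 0 < x) ∧ (∀ x ∈ p.2, 0 < x) ∧ 2 * (p.1.sum + p.2.sum) + halfTri δ = n}

/-- The `⪯`-conditions (on transposes) defining the relation `Θ`, at the level of
bipartitions `p = Υ(Λ)`, `q = Υ(Λ')`. -/
def PrecCond (n n' : ℕ) (p q : Multiset ℕ × Multiset ℕ) : Prop :=
  if Even (n + n') then
    Preceq (transpose p.2) (transpose q.1) ∧ Preceq (transpose q.2) (transpose p.1)
  else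
    Preceq (transpose p.1) (transpose q.2) ∧ Preceq (transpose q.1) (transpose p.2)

/-- `Θ` at the level of bipartitions (classes of symbols). -/
def ThetaB (n n' : ℕ) (δ : ℤ) (p q : Multiset ℕ × Multiset ℕ) : Prop :=
  q ∈ BipSet n' (deltaPrime n n' δ) ∧ PrecCond n n' p q

/-- `Λ' ∈ Θ(Λ)` for symbols, where `Λ ∈ S_{n,δ}`. -/
def InTheta (n n' : ℕ) (δ : ℤ) (Λ Λ' : Symbol) : Prop :=
  InS n' (deltaPrime n n' δ) Λ' ∧ PrecCond n n' Λ.Upsilon Λ'.Upsilon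

/-- `Λ' ∈ Θ(Λ)_k`. -/
def InThetaK (n n' : ℕ) (δ : ℤ) (k : ℕ) (Λ Λ' : Symbol) : Prop :=
  InTheta n n' δ Λ Λ' ∧
    (if Even (n + n') then (Λ'.Upsilon.2.sum : ℤ) = (Λ.Upsilon.1.sum : ℤ) - (k : ℤ)
     else (Λ'.Upsilon.1.sum : ℤ) = (Λ.Upsilon.2.sum : ℤ) - (k : ℤ))

/-- Remove (one copy of) the largest part. -/
def mtail (μ : Multiset ℕ) : Multiset ℕ := μ.erase (part μ 0)

/-- `θ_k` at the level of bipartitions: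
even case: `(μ;ν) ↦ (sort(ν, τ+k); sort(μ_2, …, μ_{m_1}, μ_1 − k))`;
odd case: `(μ;ν) ↦ (sort(ν_2, …, ν_{m_2}, ν_1 − k); sort(μ, τ+k))`. -/
def thetaBip (n n' : ℕ) (δ : ℤ) (k : ℕ) (p : Multiset ℕ × Multiset ℕ) :
    Multiset ℕ × Multiset ℕ :=
  if Even (n + n') then
    (strip ((tauNat n n' δ + k) ::ₘ p.2), strip ((part p.1 0 - k) ::ₘ mtail p.1))
  else
    (strip ((part p.2 0 - k) ::ₘ mtail p.2), strip ((tauNat n n' δ + k) ::ₘ p.1))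

/-- The unitary-type symbol of defect `δ` with `Υ = p`, whose first row has `m1`
entries and second row `m2` entries (valid whenever `m1, m2` are large enough). -/
def symbolOfBip (δ : ℤ) (p : Multiset ℕ × Multiset ℕ) (m1 m2 : ℕ) : Symbol :=
  ⟨List.ofFn (fun i : Fin m1 => 2 * (part p.1 (i : ℕ) + (m1 - 1 - (i : ℕ))) + eps δ),
   List.ofFn (fun j : Fin m2 => 2 * (part p.2 (j : ℕ) + (m2 - 1 - (j : ℕ))) + (1 - eps δ))⟩

/-- A canonical representative symbol of defect `δ` with `Υ = p`. -/
def canonicalSymbol (δ : ℤ) (p : Multiset ℕ × Multiset ℕ) : Symbol :=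
  symbolOfBip δ p (max p.1.card ((p.2.card : ℤ) + δ).toNat)
    (((max p.1.card ((p.2.card : ℤ) + δ).toNat : ℤ) - δ).toNat)

/-- A symbol representing the class `θ_k(Λ)`. -/
def thetaSymbol (n n' : ℕ) (δ : ℤ) (k : ℕ) (Λ : Symbol) : Symbol :=
  canonicalSymbol (deltaPrime n n' δ) (thetaBip n n' δ k Λ.Upsilon)

/-- `K(Λ)`: `μ_1` in the even case, `ν_1` in the odd case. -/
def bigK (n n' : ℕ) (Λ : Symbol) : ℕ :=
  if Even (n + n') then part Λ.Upsilon.1 0 else part Λ.Upsilon.2 0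

/-- `ord` at the level of bipartitions (well defined on classes). -/
def ordB (δ : ℤ) (p : Multiset ℕ × Multiset ℕ) : ℤ := (canonicalSymbol δ p).ord

/-- Strict lexicographic order on partitions. -/
def PartLexLt (μ ν : Multiset ℕ) : Prop :=
  ∃ i, (∀ j < i, part μ j = part ν j) ∧ part μ i < part ν i

/-- The total order on `S_{n,δ}` (and on `S_{n',δ'}`), at the level of bipartitions;
it depends only on the parity of `n + n'`. -/
def BLt (n n' : ℕ) (p q : Multiset ℕ × Multiset ℕ) : Prop :=
  if Even (n + n') then
    p.1.sum < q.1.sum ∨ (p.1.sum = q.1.sum ∧ PartLexLt p.1 q.1) ∨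
      (p.1 = q.1 ∧ PartLexLt p.2 q.2)
  else
    p.2.sum < q.2.sum ∨ (p.2.sum = q.2.sum ∧ PartLexLt p.2 q.2) ∨
      (p.2 = q.2 ∧ PartLexLt p.1 q.1)

/-- `q ∈ Θ♭(p)` relative to a given partial function `bar` (playing the role of `θ̄`). -/
def InFlat (n n' : ℕ) (δ : ℤ)
    (bar : Multiset ℕ × Multiset ℕ → Option (Multiset ℕ × Multiset ℕ))
    (p q : Multiset ℕ × Multiset ℕ) : Prop :=
  ThetaB n n' δ p q ∧ ∀ r ∈ BipSet n δ, BLt n n' r p → bar r ≠ some q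

/-- `bar` is the partial function `θ̄` defined by recursion along the total order:
on each `p ∈ S_{n,δ}`, if `Θ♭(p) ≠ ∅` then `bar p` is defined and is the smallest
element (w.r.t. the total order) of maximal `ord` in `Θ♭(p)`. -/
def IsThetaBar (n n' : ℕ) (δ : ℤ)
    (bar : Multiset ℕ × Multiset ℕ → Option (Multiset ℕ × Multiset ℕ)) : Prop :=
  (∀ p, p ∉ BipSet n δ → bar p = none) ∧
  ∀ p ∈ BipSet n δ,
    ((∃ q, InFlat n n' δ bar p q) → ∃ q, bar p = some q) ∧
    ∀ q, bar p = some q →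
      InFlat n n' δ bar p q ∧
      (∀ r, InFlat n n' δ bar p r →
        ordB (deltaPrime n n' δ) r ≤ ordB (deltaPrime n n' δ) q) ∧
      (∀ r, InFlat n n' δ bar p r →
        ordB (deltaPrime n n' δ) r = ordB (deltaPrime n n' δ) q → r ≠ q → BLt n n' q r)


/-! ### Toolkit: parts and transposes -/

private lemma lt_ext' {x y : ℕ} (h : ∀ t, t < x ↔ t < y) : x = y := by
  have h1 := h x; have h2 := h y; omega

private lemma sorted_countP_getD (l : List ℕ) (hl : l.Pairwise (· ≥ ·)) (j t : ℕ) :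
    t < l.getD j 0 ↔ j < l.countP (fun x => decide (t < x)) := by
  induction l generalizing j with
  | nil => simp
  | cons x xs ih =>
    rw [List.pairwise_cons] at hl
    have hcz : ∀ (h' : ¬ t < x), xs.countP (fun y => decide (t < y)) = 0 := fun h' =>
      List.countP_eq_zero.mpr (fun a ha => by
        simp only [decide_eq_true_eq]; have := hl.1 a ha; omega)
    cases j with
    | zero =>
      simp only [List.getD_cons_zero, List.countP_cons, decide_eq_true_eq]
      by_cases hx : t < x
      · simp [hx]
      · have h0 := hcz hx
        simp [hx, h0]
    | succ j =>
      simp only [List.getD_cons_succ, List.countP_cons, decide_eq_true_eq]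
      by_cases hx : t < x
      · rw [ih hl.2 j, if_pos hx]; omega
      · have h0 := hcz hx
        have h1 : xs.getD j 0 ≤ t := by
          by_contra hgt
          push_neg at hgt
          have := (ih hl.2 j).mp hgt
          omega
        rw [if_neg hx, h0]
        omega

private lemma dlist_sorted (μ : Multiset ℕ) :
    ((μ.sort (· ≤ ·)).reverse).Pairwise (· ≥ ·) := by
  rw [List.pairwise_reverse]
  exact μ.pairwise_sort (· ≤ ·)

private lemma transpose_eq_countP (μ : Multiset ℕ) (t : ℕ) :
    transpose μ t = ((μ.sort (· ≤ ·)).reverse).countP (fun x => decide (t < x)) := by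
  have h : ((((μ.sort (· ≤ ·)).reverse) : List ℕ) : Multiset ℕ) = μ := by
    rw [Multiset.coe_reverse, Multiset.sort_eq]
  conv_lhs => rw [transpose, ← h]
  rw [Multiset.filter_coe, Multiset.coe_card, List.countP_eq_length_filter]

lemma part_lt_iff (μ : Multiset ℕ) (j t : ℕ) :
    t < part μ j ↔ j < transpose μ t := by
  rw [part, transpose_eq_countP]
  exact sorted_countP_getD _ (dlist_sorted μ) j t

lemma transpose_le_card (μ : Multiset ℕ) (t : ℕ) : transpose μ t ≤ μ.card :=
  Multiset.card_le_card (Multiset.filter_le _ μ)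

lemma transpose_part_le (μ : Multiset ℕ) (i : ℕ) : transpose μ (part μ i) ≤ i := by
  by_contra h
  push_neg at h
  exact lt_irrefl _ ((part_lt_iff μ i (part μ i)).mpr h)

lemma part_antitone (μ : Multiset ℕ) {j k : ℕ} (h : j ≤ k) : part μ k ≤ part μ j := by
  rcases Nat.eq_zero_or_pos (part μ k) with h0 | h0
  · omega
  · have : part μ k - 1 < part μ k := by omega
    have h2 := (part_lt_iff μ k _).mp this
    have h3 := (part_lt_iff μ j (part μ k - 1)).mpr (by omega)
    omega

lemma part_eq_zero_of_card_le (μ : Multiset ℕ) {j : ℕ} (h : μ.card ≤ j) : part μ j = 0 := by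
  by_contra h0
  have : (0:ℕ) < part μ j := by omega
  have := (part_lt_iff μ j 0).mp this
  have := transpose_le_card μ 0
  omega

lemma transpose_strip (μ : Multiset ℕ) (t : ℕ) : transpose (strip μ) t = transpose μ t := by
  rw [transpose, strip, Multiset.filter_filter, transpose]
  congr 1
  apply Multiset.filter_congr
  intro x _
  constructor
  · rintro ⟨h, _⟩; exact h
  · intro h; exact ⟨h, by omega⟩

lemma part_strip (μ : Multiset ℕ) (j : ℕ) : part (strip μ) j = part μ j := by
  apply lt_ext'
  intro t
  rw [part_lt_iff, part_lt_iff, transpose_strip]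

lemma transpose_cons (a : ℕ) (μ : Multiset ℕ) (t : ℕ) :
    transpose (a ::ₘ μ) t = (if t < a then 1 else 0) + transpose μ t := by
  rw [transpose, Multiset.filter_cons, transpose]
  by_cases h : t < a <;> simp [h, Nat.add_comm]

lemma part_cons_zero_big {a : ℕ} (μ : Multiset ℕ) (h : part μ 0 ≤ a) :
    part (a ::ₘ μ) 0 = a := by
  apply lt_ext'
  intro t
  rw [part_lt_iff, transpose_cons]
  by_cases hta : t < a
  · rw [if_pos hta]; simp [hta]
  · rw [if_neg hta]
    have h2 : ¬ (0 < transpose μ t) := fun hc => by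
      have := (part_lt_iff μ 0 t).mpr hc; omega
    omega

lemma part_cons_succ_big {a : ℕ} (μ : Multiset ℕ) (h : part μ 0 ≤ a) (j : ℕ) :
    part (a ::ₘ μ) (j + 1) = part μ j := by
  apply lt_ext'
  intro t
  rw [part_lt_iff, transpose_cons, part_lt_iff]
  by_cases hta : t < a
  · rw [if_pos hta]; omega
  · rw [if_neg hta]
    have h1 : ¬ (0 < transpose μ t) := fun hc => by
      have := (part_lt_iff μ 0 t).mpr hc; omega
    have h2 : ¬ t < part μ j := by
      have := part_antitone μ (Nat.zero_le j)
      omega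
    omega
/-! ### Toolkit 2: sums, membership, extensionality -/

private lemma dlist_coe (μ : Multiset ℕ) :
    ((((μ.sort (· ≤ ·)).reverse) : List ℕ) : Multiset ℕ) = μ := by
  rw [Multiset.coe_reverse, Multiset.sort_eq]

lemma part_mem_or_eq_zero (μ : Multiset ℕ) (j : ℕ) : part μ j ∈ μ ∨ part μ j = 0 := by
  set l := (μ.sort (· ≤ ·)).reverse with hl
  by_cases h : j < l.length
  · left
    rw [part, ← hl, List.getD_eq_getElem l 0 h, ← dlist_coe μ, ← hl]
    exact Multiset.mem_coe.mpr (List.getElem_mem h)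
  · right
    rw [part, ← hl]
    exact List.getD_eq_default l 0 (by omega)

lemma part_le_sum (μ : Multiset ℕ) (j : ℕ) : part μ j ≤ μ.sum := by
  rcases part_mem_or_eq_zero μ j with h | h
  · exact Multiset.single_le_sum (fun x _ => Nat.zero_le x) _ h
  · omega

lemma card_le_sum_of_pos {μ : Multiset ℕ} (h : ∀ x ∈ μ, 0 < x) : μ.card ≤ μ.sum := by
  induction μ using Multiset.induction_on with
  | empty => simp
  | cons a s ih =>
    simp only [Multiset.card_cons, Multiset.sum_cons]
    have ha := h a (Multiset.mem_cons_self a s)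
    have := ih (fun x hx => h x (Multiset.mem_cons_of_mem hx))
    omega

private lemma list_sum_getD (xs : List ℕ) : ∀ m, xs.length ≤ m →
    ∑ i ∈ Finset.range m, xs.getD i 0 = xs.sum := by
  induction xs with
  | nil => intro m _; simp
  | cons x xs ih =>
    intro m hm
    obtain ⟨k, rfl⟩ : ∃ k, m = k + 1 := ⟨m - 1, by simp at hm; omega⟩
    rw [Finset.sum_range_succ']
    simp only [List.getD_cons_succ, List.getD_cons_zero, List.sum_cons]
    rw [ih k (by simp at hm; omega)]
    omega

lemma sum_parts (μ : Multiset ℕ) (m : ℕ) (hm : μ.card ≤ m) :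
    ∑ i ∈ Finset.range m, part μ i = μ.sum := by
  have h1 : μ.sum = ((μ.sort (· ≤ ·)).reverse : List ℕ).sum := by
    conv_lhs => rw [← dlist_coe μ]
    exact Multiset.sum_coe _
  have h2 : ((μ.sort (· ≤ ·)).reverse : List ℕ).length = μ.card := by
    rw [List.length_reverse, Multiset.length_sort]
  rw [h1]
  exact list_sum_getD _ m (by omega)

lemma transpose_ext_of_parts {μ ν : Multiset ℕ} (h : ∀ i, part μ i = part ν i) (t : ℕ) :
    transpose μ t = transpose ν t := by
  apply lt_ext'
  intro j
  rw [← part_lt_iff, ← part_lt_iff, h]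

private lemma count_succ_transpose (μ : Multiset ℕ) (b : ℕ) :
    transpose μ b = Multiset.count (b + 1) μ + transpose μ (b + 1) := by
  have hsplit : Multiset.filter (fun x => b + 1 = x) μ + Multiset.filter (fun x => b + 1 < x) μ
      = Multiset.filter (fun x => b < x) μ := by
    rw [Multiset.filter_add_filter]
    have h1 : Multiset.filter (fun a => b + 1 = a ∨ b + 1 < a) μ
        = Multiset.filter (fun x => b < x) μ := by
      apply Multiset.filter_congr
      intro x _
      omega
    have h2 : Multiset.filter (fun a => b + 1 = a ∧ b + 1 < a) μ = 0 := by
      rw [Multiset.filter_eq_nil]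
      intro a _
      omega
    rw [h1, h2, add_zero]
  have hc : Multiset.count (b + 1) μ = (Multiset.filter (fun x => b + 1 = x) μ).card := by
    rw [Multiset.count_eq_card_filter_eq]
  rw [transpose, ← hsplit, Multiset.card_add, hc, transpose]

lemma eq_of_parts_eq {μ ν : Multiset ℕ} (h1 : ∀ x ∈ μ, 0 < x) (h2 : ∀ x ∈ ν, 0 < x)
    (h : ∀ i, part μ i = part ν i) : μ = ν := by
  have ht := transpose_ext_of_parts h
  ext a
  cases a with
  | zero =>
    rw [Multiset.count_eq_zero.mpr (fun hc => by have := h1 0 hc; omega),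
      Multiset.count_eq_zero.mpr (fun hc => by have := h2 0 hc; omega)]
  | succ b =>
    have e1 := count_succ_transpose μ b
    have e2 := count_succ_transpose ν b
    have := ht b
    have := ht (b + 1)
    omega

lemma strip_eq_self {μ : Multiset ℕ} (h : ∀ x ∈ μ, 0 < x) : strip μ = μ :=
  Multiset.filter_eq_self.mpr h

lemma mem_strip_pos {μ : Multiset ℕ} {x : ℕ} (h : x ∈ strip μ) : 0 < x :=
  Multiset.of_mem_filter h

lemma strip_sum (μ : Multiset ℕ) : (strip μ).sum = μ.sum := by
  conv_rhs => rw [← Multiset.filter_add_not (fun x => 0 < x) μ]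
  rw [Multiset.sum_add, strip]
  have : (Multiset.filter (fun x => ¬ 0 < x) μ).sum = 0 := by
    apply Multiset.sum_eq_zero
    intro x hx
    have := Multiset.of_mem_filter hx
    omega
  omega

lemma mem_le_part_zero {μ : Multiset ℕ} {x : ℕ} (h : x ∈ μ) : x ≤ part μ 0 := by
  by_contra hc
  push_neg at hc
  have : x ∈ Multiset.filter (fun y => part μ 0 < y) μ := Multiset.mem_filter_of_mem h (by omega)
  have h1 : 0 < transpose μ (part μ 0) := by
    rw [transpose]
    exact Multiset.card_pos.mpr (fun h0 => by rw [h0] at this; exact absurd this (Multiset.notMem_zero x))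
  have := transpose_part_le μ 0
  omega

lemma part_zero_mem {μ : Multiset ℕ} (h : μ ≠ 0) : part μ 0 ∈ μ := by
  rcases part_mem_or_eq_zero μ 0 with h0 | h0
  · exact h0
  · obtain ⟨y, hy⟩ := Multiset.exists_mem_of_ne_zero h
    have := mem_le_part_zero hy
    have : y = part μ 0 := by omega
    rwa [← this]

lemma strip_cons_mtail (μ : Multiset ℕ) : strip (part μ 0 ::ₘ mtail μ) = strip μ := by
  by_cases hμ : μ = 0
  · subst hμ
    have h0 : part (0 : Multiset ℕ) 0 = 0 := part_eq_zero_of_card_le _ (by simp)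
    rw [mtail, h0]
    simp [strip, Multiset.filter_singleton]
  · rw [mtail, Multiset.cons_erase (part_zero_mem hμ)]

lemma part_pos_iff {μ : Multiset ℕ} (h : ∀ x ∈ μ, 0 < x) (j : ℕ) :
    0 < part μ j ↔ j < μ.card := by
  rw [part_lt_iff]
  have : transpose μ 0 = μ.card := by
    rw [transpose]
    congr 1
    exact Multiset.filter_eq_self.mpr (fun x hx => h x hx)
  omega
/-! ### Toolkit 3: pairMinSum -/

lemma pairMinSum_cons (x : ℕ) (L : List ℕ) :
    pairMinSum (x :: L) = (L.map (fun y => min x y)).sum + pairMinSum L := rfl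

private lemma sum_map_add {α : Type*} (L : List α) (f g : α → ℕ) :
    (L.map (fun y => f y + g y)).sum = (L.map f).sum + (L.map g).sum := by
  induction L with
  | nil => simp
  | cons x L ih => simp only [List.map_cons, List.sum_cons, ih]; omega

lemma pairMinSum_append (L1 L2 : List ℕ) :
    pairMinSum (L1 ++ L2) = pairMinSum L1 + pairMinSum L2
      + (L1.map (fun x => (L2.map (fun y => min x y)).sum)).sum := by
  induction L1 with
  | nil => simp [pairMinSum]
  | cons x L1 ih =>
    rw [List.cons_append, pairMinSum_cons, ih, pairMinSum_cons]
    simp only [List.map_append, List.sum_append, List.map_cons, List.sum_cons]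
    omega

private lemma cross_comm (L1 L2 : List ℕ) :
    (L1.map (fun x => (L2.map (fun y => min x y)).sum)).sum
      = (L2.map (fun x => (L1.map (fun y => min x y)).sum)).sum := by
  induction L1 with
  | nil => simp
  | cons x L1 ih =>
    simp only [List.map_cons, List.sum_cons, ih]
    rw [← sum_map_add]
    congr 1
    apply List.map_congr_left
    intro a _
    simp [min_comm a x]

lemma pairMinSum_swap (A B : List ℕ) : pairMinSum (A ++ B) = pairMinSum (B ++ A) := by
  rw [pairMinSum_append, pairMinSum_append, cross_comm]
  omega

lemma sum_le_of_forall2 {L L' : List ℕ} (h : List.Forall₂ (· ≤ ·) L L') : L.sum ≤ L'.sum := by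
  induction h with
  | nil => simp
  | cons hab _ ih => simp only [List.sum_cons]; omega

lemma sum_lt_of_forall2 {L L' : List ℕ} (h : List.Forall₂ (· ≤ ·) L L') (hne : L ≠ L') :
    L.sum < L'.sum := by
  induction h with
  | nil => exact absurd rfl hne
  | @cons a b l l' hab ht ih =>
    by_cases he : l = l'
    · subst he
      have hab' : a ≠ b := fun hc => hne (by rw [hc])
      simp only [List.sum_cons]
      omega
    · have := ih he
      have := sum_le_of_forall2 (List.Forall₂.imp (fun {x y} h => h) ht)
      simp only [List.sum_cons]
      omega

private lemma sum_map_min_le {x x' : ℕ} {L L' : List ℕ} (h : List.Forall₂ (· ≤ ·) L L')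
    (hx : x ≤ x') : (L.map (fun y => min x y)).sum ≤ (L'.map (fun y => min x' y)).sum := by
  induction h with
  | nil => simp
  | cons hab _ ih =>
    simp only [List.map_cons, List.sum_cons]
    have := min_le_min hx hab
    omega

lemma pairMinSum_mono {L L' : List ℕ} (h : List.Forall₂ (· ≤ ·) L L') :
    pairMinSum L ≤ pairMinSum L' := by
  induction h with
  | nil => simp
  | @cons a b l l' hab ht ih =>
    rw [pairMinSum_cons, pairMinSum_cons]
    have := sum_map_min_le ht hab
    omega

private lemma map_min_le_self (x : ℕ) (L : List ℕ) :
    List.Forall₂ (· ≤ ·) (L.map (fun y => min x y)) L := by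
  induction L with
  | nil => simp
  | cons a L ih => exact List.Forall₂.cons (min_le_right x a) ih

lemma pairMinSum_head_lt (x x' : ℕ) {L L' : List ℕ} (hF : List.Forall₂ (· ≤ ·) L L')
    (hbig : ∀ y ∈ L', y ≤ x') (hne : L ≠ L') :
    pairMinSum (x :: L) < pairMinSum (x' :: L') := by
  have h1 : (L.map (fun y => min x y)).sum ≤ L.sum := sum_le_of_forall2 (map_min_le_self x L)
  have h2 : L.sum < L'.sum := sum_lt_of_forall2 hF hne
  have h3 : (L'.map (fun y => min x' y)).sum = L'.sum := by
    have he : L'.map (fun y => min x' y) = L'.map id :=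
      List.map_congr_left (fun a ha => min_eq_right (hbig a ha))
    rw [he, List.map_id]
  have h4 : pairMinSum L ≤ pairMinSum L' := pairMinSum_mono hF
  rw [pairMinSum_cons, pairMinSum_cons]
  omega

lemma pairMinSum_map_add_two (L : List ℕ) :
    pairMinSum (L.map (· + 2)) = pairMinSum L + L.length * (L.length - 1) := by
  induction L with
  | nil => simp [pairMinSum]
  | cons x L ih =>
    simp only [List.map_cons, pairMinSum_cons, ih, List.map_map]
    have h1 : (L.map ((fun y => min (x + 2) y) ∘ (· + 2))).sum
        = (L.map (fun y => min x y + 2)).sum := by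
      congr 1
      apply List.map_congr_left
      intro a _
      simp [Function.comp, min_add_add_right]
    rw [h1, sum_map_add]
    have h2 : (L.map (fun _ => 2)).sum = 2 * L.length := by
      rw [List.map_const', List.sum_replicate]
      simp [smul_eq_mul, Nat.mul_comm]
    have hk : (L.length + 1) * (L.length + 1 - 1) = L.length * (L.length - 1) + 2 * L.length := by
      cases L.length with
      | zero => simp
      | succ m => simp only [Nat.add_sub_cancel]; ring
    have h4 : List.map (min x) L = List.map (fun y => x ⊓ y) L := rfl
    rw [h4, h2]
    simp only [List.length_cons]
    omega
/-! ### Toolkit 4: shift invariance of pairMinSum -/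

private lemma sum_map_min_const (X : List ℕ) (c : ℕ) (h : ∀ x ∈ X, c ≤ x) :
    (X.map (fun x => min x c)).sum = c * X.length := by
  induction X with
  | nil => simp
  | cons a X ih =>
    simp only [List.map_cons, List.sum_cons, List.length_cons]
    rw [min_eq_right (h a (by simp)), ih (fun x hx => h x (by simp [hx]))]
    ring

private lemma sum_map_min_const' (X : List ℕ) (c : ℕ) (h : ∀ x ∈ X, c ≤ x) :
    (X.map (fun x => min c x)).sum = c * X.length := by
  have he : X.map (fun x => min c x) = X.map (fun x => min x c) :=
    List.map_congr_left (fun a _ => min_comm c a)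
  rw [he, sum_map_min_const X c h]

private lemma cross_map_add_two (A B : List ℕ) :
    ((A.map (· + 2)).map (fun x => ((B.map (· + 2)).map (fun y => min x y)).sum)).sum
      = (A.map (fun x => (B.map (fun y => min x y)).sum)).sum + 2 * A.length * B.length := by
  rw [List.map_map]
  have h2 : A.map ((fun x => ((B.map (· + 2)).map (fun y => min x y)).sum) ∘ (· + 2))
      = A.map (fun x => (B.map (fun y => min x y)).sum + 2 * B.length) := by
    apply List.map_congr_left
    intro a _
    simp only [Function.comp]
    rw [List.map_map]
    have he : B.map ((fun y => min (a + 2) y) ∘ (· + 2)) = B.map (fun y => min a y + 2) := by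
      apply List.map_congr_left
      intro y _
      simp [Function.comp, min_add_add_right]
    rw [he, sum_map_add]
    have hc : (B.map (fun _ => 2)).sum = 2 * B.length := by
      rw [List.map_const', List.sum_replicate, smul_eq_mul]
      ring
    rw [hc]
  rw [h2, sum_map_add]
  have hc : (A.map (fun _ => 2 * B.length)).sum = A.length * (2 * B.length) := by
    rw [List.map_const', List.sum_replicate, smul_eq_mul]
  rw [hc]
  ring

private lemma pairMinSum_shift (A B : List ℕ) (c c' : ℕ) (hc : c ≤ 1) (hc' : c' ≤ 1)
    (hcc : min c c' = 0) :
    pairMinSum ((A.map (· + 2) ++ [c]) ++ (B.map (· + 2) ++ [c']))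
      = pairMinSum (A ++ B) + (c + c') * (A.length + B.length)
        + (A.length + B.length) * (A.length + B.length - 1) := by
  have hA2 : ∀ x ∈ A.map (· + 2), c ≤ x := by
    intro x hx; obtain ⟨a, _, rfl⟩ := List.mem_map.mp hx; omega
  have hA2' : ∀ x ∈ A.map (· + 2), c' ≤ x := by
    intro x hx; obtain ⟨a, _, rfl⟩ := List.mem_map.mp hx; omega
  have hB2 : ∀ x ∈ B.map (· + 2), c ≤ x := by
    intro x hx; obtain ⟨a, _, rfl⟩ := List.mem_map.mp hx; omega
  have hB2' : ∀ x ∈ B.map (· + 2), c' ≤ x := by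
    intro x hx; obtain ⟨a, _, rfl⟩ := List.mem_map.mp hx; omega
  have hsingle : ∀ c₀ : ℕ, pairMinSum [c₀] = 0 := by intro c₀; simp [pairMinSum]
  rw [pairMinSum_append ((A.map (· + 2)) ++ [c]) ((B.map (· + 2)) ++ [c'])]
  rw [pairMinSum_append (A.map (· + 2)) [c]]
  rw [pairMinSum_append (B.map (· + 2)) [c']]
  rw [pairMinSum_append A B]
  rw [hsingle c, hsingle c']
  simp only [List.map_append, List.sum_append, List.map_cons, List.map_nil, List.sum_cons,
    List.sum_nil, List.length_map, add_zero]
  rw [sum_map_add]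
  rw [cross_map_add_two A B]
  rw [pairMinSum_map_add_two A, pairMinSum_map_add_two B]
  rw [sum_map_min_const _ c hA2, sum_map_min_const _ c' hA2']
  rw [sum_map_min_const' _ c hB2, sum_map_min_const _ c' hB2']
  rw [hcc]
  simp only [List.length_map]
  have e1 : A.length * (A.length - 1) + B.length * (B.length - 1) + 2 * A.length * B.length
      = (A.length + B.length) * (A.length + B.length - 1) := by
    cases A.length with
    | zero => simp
    | succ a' =>
      cases B.length with
      | zero => simp
      | succ b' =>
        have hx : a' + 1 + (b' + 1) - 1 = a' + b' + 1 := by omega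
        simp only [Nat.succ_sub_one, Nat.add_sub_cancel, hx]
        ring
  have e2 : (c + c') * (A.length + B.length)
      = c * A.length + c' * A.length + c * B.length + c' * B.length := by ring
  linarith [e1, e2]
/-! ### Toolkit 5: ord of symbolOfBip -/

private lemma row_succ (μ : Multiset ℕ) (e m : ℕ) (hm : μ.card ≤ m) :
    List.ofFn (fun i : Fin (m + 1) => 2 * (part μ (i : ℕ) + (m + 1 - 1 - (i : ℕ))) + e)
      = (List.ofFn (fun i : Fin m => 2 * (part μ (i : ℕ) + (m - 1 - (i : ℕ))) + e)).map (· + 2)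
        ++ [e] := by
  rw [List.ofFn_succ', List.concat_eq_append, List.map_ofFn]
  congr 1
  · exact congrArg List.ofFn (funext fun i => by
      simp only [Function.comp, Fin.coe_castSucc]
      have := i.isLt
      omega)
  · simp only [Fin.val_last]
    rw [part_eq_zero_of_card_le μ hm]
    have : 2 * (0 + (m + 1 - 1 - m)) + e = e := by omega
    rw [this]

private lemma sum_Icc_one_eq_range (f : ℕ → ℤ) (m : ℕ) :
    ∑ i ∈ Finset.Icc 1 m, f i = ∑ i ∈ Finset.range m, f (i + 1) := by
  induction m with
  | zero => simp
  | succ k ih => rw [Finset.sum_Icc_succ_top (by omega), ih, Finset.sum_range_succ]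

private lemma icc_sq_succ (N : ℕ) :
    ∑ i ∈ Finset.Icc 1 ((N + 2) / 2), (((N + 2 : ℕ) : ℤ) - 2 * (i : ℤ)) ^ 2
      = (N : ℤ) ^ 2 + ∑ i ∈ Finset.Icc 1 (N / 2), ((N : ℤ) - 2 * (i : ℤ)) ^ 2 := by
  have hdiv : (N + 2) / 2 = N / 2 + 1 := by omega
  rw [hdiv, sum_Icc_one_eq_range, sum_Icc_one_eq_range]
  have hc : ∀ i : ℕ, (((N + 2 : ℕ) : ℤ) - 2 * ((i + 1 : ℕ) : ℤ)) ^ 2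
      = ((N : ℤ) - 2 * (i : ℤ)) ^ 2 := by
    intro i; push_cast; ring
  rw [Finset.sum_congr rfl (fun i _ => hc i), Finset.sum_range_succ']
  have h0 : ((N : ℤ) - 2 * ((0 : ℕ) : ℤ)) ^ 2 = (N : ℤ) ^ 2 := by push_cast; ring
  rw [h0, add_comm]

private lemma entries_symbolOfBip (δ : ℤ) (p : Multiset ℕ × Multiset ℕ) (m1 m2 : ℕ) :
    (symbolOfBip δ p m1 m2).entries
      = List.ofFn (fun i : Fin m1 => 2 * (part p.1 (i : ℕ) + (m1 - 1 - (i : ℕ))) + eps δ)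
        ++ List.ofFn (fun j : Fin m2 => 2 * (part p.2 (j : ℕ) + (m2 - 1 - (j : ℕ))) + (1 - eps δ)) :=
  rfl

lemma ord_symbolOfBip_succ (δ : ℤ) (p : Multiset ℕ × Multiset ℕ) (m1 m2 : ℕ)
    (h1 : p.1.card ≤ m1) (h2 : p.2.card ≤ m2) :
    (symbolOfBip δ p (m1 + 1) (m2 + 1)).ord = (symbolOfBip δ p m1 m2).ord := by
  have heps : eps δ ≤ 1 := by rw [eps]; split <;> omega
  have hmin : min (eps δ) (1 - eps δ) = 0 := by rw [eps]; split <;> simp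
  have hsum1 : eps δ + (1 - eps δ) = 1 := by omega
  set A := List.ofFn (fun i : Fin m1 => 2 * (part p.1 (i : ℕ) + (m1 - 1 - (i : ℕ))) + eps δ)
    with hA
  set B := List.ofFn (fun j : Fin m2 => 2 * (part p.2 (j : ℕ) + (m2 - 1 - (j : ℕ)))
    + (1 - eps δ)) with hB
  have hent : (symbolOfBip δ p (m1 + 1) (m2 + 1)).entries
      = (A.map (· + 2) ++ [eps δ]) ++ (B.map (· + 2) ++ [1 - eps δ]) := by
    rw [entries_symbolOfBip, row_succ p.1 (eps δ) m1 h1, row_succ p.2 (1 - eps δ) m2 h2]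
  have hentold : (symbolOfBip δ p m1 m2).entries = A ++ B := entries_symbolOfBip δ p m1 m2
  have hlA : A.length = m1 := by rw [hA, List.length_ofFn]
  have hlB : B.length = m2 := by rw [hB, List.length_ofFn]
  have hP : pairMinSum ((A.map (· + 2) ++ [eps δ]) ++ (B.map (· + 2) ++ [1 - eps δ]))
      = pairMinSum (A ++ B) + (m1 + m2) ^ 2 := by
    rw [pairMinSum_shift A B (eps δ) (1 - eps δ) heps (by omega) hmin, hlA, hlB, hsum1]
    have hk : ∀ k : ℕ, 1 * k + k * (k - 1) = k ^ 2 := by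
      intro k
      cases k with
      | zero => simp
      | succ k' => simp only [Nat.add_sub_cancel]; ring
    have := hk (m1 + m2)
    omega
  have hlen : ((A.map (· + 2) ++ [eps δ]) ++ (B.map (· + 2) ++ [1 - eps δ])).length
      = (m1 + m2) + 2 := by
    simp only [List.length_append, List.length_map, List.length_cons, List.length_nil, hlA, hlB]
    omega
  have hlenold : (A ++ B).length = m1 + m2 := by
    rw [List.length_append, hlA, hlB]
  simp only [Symbol.ord, hent, hentold, hlen, hlenold, hP]
  rw [icc_sq_succ (m1 + m2)]
  push_cast
  ring

lemma ordB_eq_symbolOfBip (δ : ℤ) (p : Multiset ℕ × Multiset ℕ) (m : ℕ)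
    (hm : max p.1.card (((p.2.card : ℤ) + δ).toNat) ≤ m) :
    (symbolOfBip δ p m (((m : ℤ) - δ).toNat)).ord = ordB δ p := by
  induction m, hm using Nat.le_induction with
  | base =>
    unfold ordB canonicalSymbol
    rw [Nat.cast_max]
  | succ m hm ih =>
    have h1 : ((p.2.card : ℤ) + δ).toNat ≤ m := le_trans (le_max_right _ _) hm
    have h1' : p.1.card ≤ m := le_trans (le_max_left _ _) hm
    have hts : (((m + 1 : ℕ) : ℤ) - δ).toNat = ((m : ℤ) - δ).toNat + 1 := by
      push_cast
      omega
    have h2 : p.2.card ≤ ((m : ℤ) - δ).toNat := by omega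
    rw [hts, ord_symbolOfBip_succ δ p m _ h1' h2, ih]
/-! ### Toolkit 6: arithmetic facts in the stable range -/

private lemma two_halfTri (x : ℤ) : 2 * halfTri x = x.natAbs * (x.natAbs + 1) := by
  rw [halfTri, Nat.mul_div_cancel' (even_iff_two_dvd.mp (Nat.even_mul_succ_self x.natAbs))]

private lemma consecutive_tri (k : ℕ) (hk : 1 ≤ k) :
    k * (k + 1) = (k - 1) * (k - 1 + 1) + 2 * k := by
  obtain ⟨j, rfl⟩ : ∃ j, k = j + 1 := ⟨k - 1, by omega⟩
  simp only [Nat.add_sub_cancel]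
  ring

private lemma tri_ge (k : ℕ) : 2 * k ≤ k * (k + 1) := by
  cases k with
  | zero => simp
  | succ m => nlinarith

lemma arith_facts (n n' : ℕ) (δ : ℤ) (hδ : IsAdmissible δ) (hr : 2 * n ≤ n') (s : ℕ)
    (hn : n = 2 * s + halfTri δ) :
    (2 * tauNat n n' δ + n + halfTri (deltaPrime n n' δ) = n' + halfTri δ)
    ∧ s ≤ tauNat n n' δ
    ∧ (if Even (n + n') then
        2 * (s : ℤ) + 1 ≤ 2 * (tauNat n n' δ : ℤ) + 2 * (deltaPrime n n' δ)
          + 2 * (eps (deltaPrime n n' δ) : ℤ)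
      else
        2 * (s : ℤ) + 2 * (eps (deltaPrime n n' δ) : ℤ)
          ≤ 2 * (tauNat n n' δ : ℤ) - 2 * (deltaPrime n n' δ) + 1) := by
  have hA := two_halfTri δ
  by_cases hpar : Even (n + n')
  · have hpar' : (n + n') % 2 = 0 := Nat.even_iff.mp hpar
    rcases hδ with ⟨hev, hge⟩ | ⟨hod, hlt⟩
    · by_cases h0 : δ = 0
      · subst h0
        have hδ' : deltaPrime n n' 0 = 0 := by rw [deltaPrime, if_pos hpar, if_pos rfl]
        rw [hδ']
        have hB : halfTri 0 = 0 := rfl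
        have heps : eps (0 : ℤ) = 1 := by rw [eps, if_pos Even.zero]
        rw [if_pos hpar, heps, hB]
        rw [hB] at hn
        unfold tauNat
        rw [hδ', hB]
        refine ⟨by omega, by omega, ?_⟩
        have h2T : 2 * ((n' + halfTri 0 - (n + halfTri 0)) / 2) + n = n' := by
          rw [hB]; omega
        push_cast
        omega
      · have hd1 : 1 ≤ δ.natAbs := by omega
        have hδ' : deltaPrime n n' δ = -δ + 1 := by rw [deltaPrime, if_pos hpar, if_neg h0]
        have hev' : δ % 2 = 0 := Int.even_iff.mp hev
        have hd2 : 2 ≤ δ.natAbs := by omega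
        have hB := two_halfTri (-δ + 1)
        have hd' : (-δ + 1).natAbs = δ.natAbs - 1 := by omega
        rw [hd'] at hB
        have htri := consecutive_tri δ.natAbs (by omega)
        have hAB : 2 * halfTri δ = 2 * halfTri (-δ + 1) + 2 * δ.natAbs := by
          linarith [hA, hB, htri]
        have hAd : 2 * δ.natAbs ≤ 2 * halfTri δ := by linarith [tri_ge δ.natAbs, hA]
        have hepsv : eps (-δ + 1) = 0 := by
          rw [eps, if_neg]
          rw [Int.even_iff]
          omega
        rw [hδ', if_pos hpar, hepsv]
        unfold tauNat
        rw [hδ']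
        refine ⟨by omega, by omega, ?_⟩
        push_cast
        omega
    · have hod' : δ % 2 = 1 := Int.odd_iff.mp hod
      have hδ' : deltaPrime n n' δ = -δ + 1 := by
        rw [deltaPrime, if_pos hpar, if_neg (by omega)]
      have hB := two_halfTri (-δ + 1)
      have hd' : (-δ + 1).natAbs = δ.natAbs + 1 := by omega
      rw [hd'] at hB
      have htri := consecutive_tri (δ.natAbs + 1) (by omega)
      have hAB : 2 * halfTri (-δ + 1) = 2 * halfTri δ + 2 * (δ.natAbs + 1) := by
        linarith [hA, hB, htri]
      have hAd : 2 * δ.natAbs ≤ 2 * halfTri δ := by linarith [tri_ge δ.natAbs, hA]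
      have hdodd : δ.natAbs % 2 = 1 := by omega
      have hepsv : eps (-δ + 1) = 1 := by
        rw [eps, if_pos]
        rw [Int.even_iff]
        omega
      rw [hδ', if_pos hpar, hepsv]
      unfold tauNat
      rw [hδ']
      refine ⟨by omega, by omega, ?_⟩
      push_cast
      omega
  · have hpar' : (n + n') % 2 = 1 := Nat.odd_iff.mp (Nat.not_even_iff_odd.mp hpar)
    have hδ' : deltaPrime n n' δ = -δ - 1 := by rw [deltaPrime, if_neg hpar]
    rcases hδ with ⟨hev, hge⟩ | ⟨hod, hlt⟩
    · have hev' : δ % 2 = 0 := Int.even_iff.mp hev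
      have hB := two_halfTri (-δ - 1)
      have hd' : (-δ - 1).natAbs = δ.natAbs + 1 := by omega
      rw [hd'] at hB
      have htri := consecutive_tri (δ.natAbs + 1) (by omega)
      have hAB : 2 * halfTri (-δ - 1) = 2 * halfTri δ + 2 * (δ.natAbs + 1) := by
        linarith [hA, hB, htri]
      have hAd : 2 * δ.natAbs ≤ 2 * halfTri δ := by linarith [tri_ge δ.natAbs, hA]
      have hepsv : eps (-δ - 1) = 0 := by
        rw [eps, if_neg]
        rw [Int.even_iff]
        omega
      rw [hδ', if_neg hpar, hepsv]
      unfold tauNat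
      rw [hδ']
      refine ⟨by omega, by omega, ?_⟩
      push_cast
      omega
    · have hod' : δ % 2 = 1 := Int.odd_iff.mp hod
      have hd1 : 1 ≤ δ.natAbs := by omega
      have hB := two_halfTri (-δ - 1)
      have hd' : (-δ - 1).natAbs = δ.natAbs - 1 := by omega
      rw [hd'] at hB
      have htri := consecutive_tri δ.natAbs (by omega)
      have hAB : 2 * halfTri δ = 2 * halfTri (-δ - 1) + 2 * δ.natAbs := by
        linarith [hA, hB, htri]
      have hAd : 2 * δ.natAbs ≤ 2 * halfTri δ := by linarith [tri_ge δ.natAbs, hA]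
      have hdodd : δ.natAbs % 2 = 1 := by omega
      have hepsv : eps (-δ - 1) = 1 := by
        rw [eps, if_pos]
        rw [Int.even_iff]
        omega
      rw [hδ', if_neg hpar, hepsv]
      unfold tauNat
      rw [hδ']
      refine ⟨by omega, by omega, ?_⟩
      push_cast
      omega
/-! ### Toolkit 7: the structure of θ₀ and its membership in Θ -/

lemma theta0_even {n n' : ℕ} {δ : ℤ} {p : Multiset ℕ × Multiset ℕ} (hpar : Even (n + n'))
    (hp1 : ∀ x ∈ p.1, 0 < x) :
    thetaBip n n' δ 0 p = (strip (tauNat n n' δ ::ₘ p.2), p.1) := by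
  rw [thetaBip, if_pos hpar, Nat.sub_zero, strip_cons_mtail, strip_eq_self hp1, Nat.add_zero]

lemma theta0_odd {n n' : ℕ} {δ : ℤ} {p : Multiset ℕ × Multiset ℕ} (hpar : ¬ Even (n + n'))
    (hp2 : ∀ x ∈ p.2, 0 < x) :
    thetaBip n n' δ 0 p = (p.2, strip (tauNat n n' δ ::ₘ p.1)) := by
  rw [thetaBip, if_neg hpar, Nat.sub_zero, strip_cons_mtail, strip_eq_self hp2, Nat.add_zero]

lemma theta0_mem_even {n n' : ℕ} {δ : ℤ} {p : Multiset ℕ × Multiset ℕ}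
    (hδ : IsAdmissible δ) (hpar : Even (n + n')) (hr : 2 * n ≤ n') (hp : p ∈ BipSet n δ) :
    ThetaB n n' δ p (thetaBip n n' δ 0 p) := by
  obtain ⟨hp1, hp2, hps⟩ := hp
  obtain ⟨hF1, hF2, _⟩ := arith_facts n n' δ hδ hr (p.1.sum + p.2.sum) (by omega)
  rw [theta0_even hpar hp1]
  constructor
  · refine ⟨fun x hx => mem_strip_pos hx, hp1, ?_⟩
    have hsum : (strip (tauNat n n' δ ::ₘ p.2)).sum = tauNat n n' δ + p.2.sum := by
      rw [strip_sum, Multiset.sum_cons]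
    simp only [hsum]
    omega
  · rw [PrecCond, if_pos hpar]
    constructor
    · intro i
      rw [transpose_strip, transpose_cons]
      split_ifs <;> omega
    · exact fun i => ⟨Nat.le_succ_of_le le_rfl, le_rfl⟩

lemma theta0_mem_odd {n n' : ℕ} {δ : ℤ} {p : Multiset ℕ × Multiset ℕ}
    (hδ : IsAdmissible δ) (hpar : ¬ Even (n + n')) (hr : 2 * n ≤ n') (hp : p ∈ BipSet n δ) :
    ThetaB n n' δ p (thetaBip n n' δ 0 p) := by
  obtain ⟨hp1, hp2, hps⟩ := hp
  obtain ⟨hF1, hF2, _⟩ := arith_facts n n' δ hδ hr (p.1.sum + p.2.sum) (by omega)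
  rw [theta0_odd hpar hp2]
  constructor
  · refine ⟨hp2, fun x hx => mem_strip_pos hx, ?_⟩
    have hsum : (strip (tauNat n n' δ ::ₘ p.1)).sum = tauNat n n' δ + p.1.sum := by
      rw [strip_sum, Multiset.sum_cons]
    simp only [hsum]
    omega
  · rw [PrecCond, if_neg hpar]
    constructor
    · intro i
      rw [transpose_strip, transpose_cons]
      split_ifs <;> omega
    · exact fun i => ⟨Nat.le_succ_of_le le_rfl, le_rfl⟩
/-! ### Toolkit 8: the core comparison -/

private lemma forall₂_ofFn {k : ℕ} (f g : Fin k → ℕ) (h : ∀ i, f i ≤ g i) :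
    List.Forall₂ (· ≤ ·) (List.ofFn f) (List.ofFn g) := by
  induction k with
  | zero => simp
  | succ k ih =>
    rw [List.ofFn_succ, List.ofFn_succ]
    exact List.Forall₂.cons (h 0) (ih _ _ (fun i => h i.succ))

private lemma forall₂_append {L1 L2 L1' L2' : List ℕ} (h1 : List.Forall₂ (· ≤ ·) L1 L1')
    (h2 : List.Forall₂ (· ≤ ·) L2 L2') : List.Forall₂ (· ≤ ·) (L1 ++ L2) (L1' ++ L2') := by
  induction h1 with
  | nil => exact h2
  | cons hab _ ih => exact List.Forall₂.cons hab ih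

private lemma ofFn_append_ne_left {k l : ℕ} (f g : Fin k → ℕ) (u v : Fin l → ℕ) (i : Fin k)
    (hi : f i ≠ g i) : (List.ofFn f ++ List.ofFn u) ≠ (List.ofFn g ++ List.ofFn v) := by
  intro h
  have h2 := List.append_inj h (by rw [List.length_ofFn, List.length_ofFn])
  exact hi (congrFun (List.ofFn_inj.mp h2.1) i)

private lemma ofFn_append_ne_right {k l : ℕ} (f g : Fin k → ℕ) (u v : Fin l → ℕ) (j : Fin l)
    (hj : u j ≠ v j) : (List.ofFn f ++ List.ofFn u) ≠ (List.ofFn g ++ List.ofFn v) := by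
  intro h
  have h2 := List.append_inj h (by rw [List.length_ofFn, List.length_ofFn])
  exact hj (congrFun (List.ofFn_inj.mp h2.2) j)

private lemma core_lt {m2 mm : ℕ} (fq fθ : Fin (mm + 1) → ℕ) (gq gθ : Fin m2 → ℕ)
    (htail : ∀ i : Fin mm, fq i.succ ≤ fθ i.succ)
    (hg : ∀ j, gq j ≤ gθ j)
    (hbig1 : ∀ i : Fin mm, fθ i.succ ≤ fθ 0)
    (hbig2 : ∀ j, gθ j ≤ fθ 0)
    (hne : (List.ofFn (fun i : Fin mm => fq i.succ) ++ List.ofFn gq)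
         ≠ (List.ofFn (fun i : Fin mm => fθ i.succ) ++ List.ofFn gθ)) :
    pairMinSum (List.ofFn fq ++ List.ofFn gq) < pairMinSum (List.ofFn fθ ++ List.ofFn gθ) := by
  rw [List.ofFn_succ (f := fq), List.ofFn_succ (f := fθ), List.cons_append, List.cons_append]
  apply pairMinSum_head_lt
  · exact forall₂_append (forall₂_ofFn _ _ htail) (forall₂_ofFn _ _ hg)
  · intro y hy
    rcases List.mem_append.mp hy with h | h
    · obtain ⟨i, rfl⟩ := List.mem_ofFn.mp h
      exact hbig1 i
    · obtain ⟨j, rfl⟩ := List.mem_ofFn.mp h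
      exact hbig2 j
  · exact hne
/-! ### Toolkit 9: ord comparison with θ₀, even case -/

lemma ord_lt_theta0_even {n n' : ℕ} {δ : ℤ} {p q : Multiset ℕ × Multiset ℕ}
    (hδ : IsAdmissible δ) (hpar : Even (n + n')) (hr : 2 * n ≤ n') (hp : p ∈ BipSet n δ)
    (hq : ThetaB n n' δ p q) (hne : q ≠ thetaBip n n' δ 0 p) :
    ordB (deltaPrime n n' δ) q < ordB (deltaPrime n n' δ) (thetaBip n n' δ 0 p) := by
  obtain ⟨hp1, hp2, hps⟩ := hp
  obtain ⟨⟨hq1, hq2, hqs⟩, hqP⟩ := hq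
  obtain ⟨hF1, hF2, hF3⟩ := arith_facts n n' δ hδ hr (p.1.sum + p.2.sum) (by omega)
  rw [if_pos hpar] at hF3
  rw [PrecCond, if_pos hpar] at hqP
  obtain ⟨hqP1, hqP2⟩ := hqP
  rw [theta0_even hpar hp1] at hne ⊢
  set δ' := deltaPrime n n' δ with hδ'def
  set T := tauNat n n' δ with hTdef
  set θ1 := strip (T ::ₘ p.2) with hθ1
  have hθpos : ∀ x ∈ θ1, 0 < x := fun x hx => mem_strip_pos hx
  have hT2 : part p.2 0 ≤ T := by
    have ha := part_le_sum p.2 0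
    omega
  have hθ10 : part θ1 0 = T := by rw [hθ1, part_strip, part_cons_zero_big _ hT2]
  have hθ1S : ∀ i, part θ1 (i + 1) = part p.2 i := fun i => by
    rw [hθ1, part_strip, part_cons_succ_big _ hT2]
  have hb1 : ∀ i, part q.1 (i + 1) ≤ part p.2 i := by
    intro i
    by_contra hc
    push_neg at hc
    have h1 := (part_lt_iff q.1 (i + 1) (part p.2 i)).mp hc
    have h2 := transpose_part_le p.2 i
    have h3 := (hqP1 (part p.2 i)).1
    omega
  have hb2 : ∀ j, part q.2 j ≤ part p.1 j := by
    intro j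
    by_contra hc
    push_neg at hc
    have h1 := (part_lt_iff q.2 j (part p.1 j)).mp hc
    have h2 := transpose_part_le p.1 j
    have h3 := (hqP2 (part p.1 j)).2
    omega
  have hθsum : θ1.sum = T + p.2.sum := by rw [hθ1, strip_sum, Multiset.sum_cons]
  have hθS : 2 * (θ1.sum + p.1.sum) + halfTri δ' = n' := by rw [hθsum]; omega
  have hε : eps δ' ≤ 1 := by unfold eps; split <;> omega
  -- sizes
  set mm := max (max q.1.card (((q.2.card : ℤ) + δ').toNat))
    (max θ1.card (((p.1.card : ℤ) + δ').toNat)) with hmmdef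
  set m2 := ((((mm + 1 : ℕ)) : ℤ) - δ').toNat with hm2def
  have hmq : max q.1.card (((q.2.card : ℤ) + δ').toNat) ≤ mm + 1 := by omega
  have hmθ : max (θ1, p.1).1.card ((((θ1, p.1).2.card : ℤ) + δ').toNat) ≤ mm + 1 := by
    show max θ1.card (((p.1.card : ℤ) + δ').toNat) ≤ mm + 1
    omega
  have hordq := ordB_eq_symbolOfBip δ' q (mm + 1) hmq
  have hordθ := ordB_eq_symbolOfBip δ' (θ1, p.1) (mm + 1) hmθ
  rw [← hm2def] at hordq hordθ
  have hcq1 : q.1.card ≤ mm + 1 := by omega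
  have hcθ1 : θ1.card ≤ mm := le_trans (le_max_left _ _) (le_max_right _ _)
  have htn1 : (((q.2.card : ℤ) + δ').toNat) ≤ mm := le_trans (le_max_right _ _) (le_max_left _ _)
  have htn2 : (((p.1.card : ℤ) + δ').toNat) ≤ mm := le_trans (le_max_right _ _) (le_max_right _ _)
  have hm2' : (m2 : ℤ) = ((mm + 1 : ℕ) : ℤ) - δ' := by
    rw [hm2def]
    push_cast
    omega
  have hcq2 : q.2.card ≤ m2 := by omega
  have hcp1 : p.1.card ≤ m2 := by omega
  -- the key pairMinSum comparison
  have key : pairMinSum ((symbolOfBip δ' q (mm + 1) m2).entries)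
      < pairMinSum ((symbolOfBip δ' (θ1, p.1) (mm + 1) m2).entries) := by
    rw [entries_symbolOfBip, entries_symbolOfBip]
    simp only [show ((θ1, p.1).1) = θ1 from rfl, show ((θ1, p.1).2) = p.1 from rfl]
    apply core_lt
    · intro i
      simp only [Fin.val_succ]
      have h1 := hb1 (i : ℕ)
      have h2 := hθ1S (i : ℕ)
      omega
    · intro j
      have h1 := hb2 (j : ℕ)
      omega
    · intro i
      simp only [Fin.val_succ, Fin.val_zero]
      have h1 := hθ1S (i : ℕ)
      have h2 := part_antitone p.2 (Nat.zero_le (i : ℕ))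
      omega
    · intro j
      simp only [Fin.val_zero]
      have h1 : part p.1 (j : ℕ) ≤ p.1.sum := part_le_sum p.1 (j : ℕ)
      have h2 : part p.1 (j : ℕ) + p.2.sum ≤ p.1.sum + p.2.sum := by
        have := part_le_sum p.1 (j : ℕ); omega
      rw [hθ10]
      omega
    · -- strictness witness
      by_cases hc2 : q.2 = (θ1, p.1).2
      · have hc2' : q.2 = p.1 := hc2
        have hq1ne : q.1 ≠ θ1 := by
          intro hc1
          exact hne (Prod.ext_iff.mpr ⟨hc1, hc2'⟩)
        have hsq : q.1.sum = θ1.sum := by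
          have h4 : q.2.sum = p.1.sum := by rw [hc2']
          omega
        have hex : ∃ i, part q.1 (i + 1) ≠ part θ1 (i + 1) := by
          by_contra hall
          push_neg at hall
          have s1 := sum_parts q.1 (max q.1.card θ1.card + 1) (by omega)
          have s2 := sum_parts θ1 (max q.1.card θ1.card + 1) (by omega)
          rw [Finset.sum_range_succ'] at s1 s2
          have hcongr : ∑ i ∈ Finset.range (max q.1.card θ1.card), part q.1 (i + 1)
              = ∑ i ∈ Finset.range (max q.1.card θ1.card), part θ1 (i + 1) :=
            Finset.sum_congr rfl (fun i _ => hall i)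
          have h0 : part q.1 0 = part θ1 0 := by omega
          refine hq1ne (eq_of_parts_eq hq1 hθpos (fun i => ?_))
          cases i with
          | zero => exact h0
          | succ i => exact hall i
        obtain ⟨i, hi⟩ := hex
        have hilt : part q.1 (i + 1) < part θ1 (i + 1) := by
          have := hb1 i
          have := hθ1S i
          omega
        have hbound : i < mm := by
          have hpos : 0 < part θ1 (i + 1) := by omega
          have := (part_pos_iff hθpos (i + 1)).mp hpos
          omega
        refine ofFn_append_ne_left _ _ _ _ ⟨i, hbound⟩ ?_
        simp only [Fin.val_succ]
        omega
      · have hex : ∃ j, part q.2 j ≠ part p.1 j := by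
          by_contra hall
          push_neg at hall
          exact hc2 (eq_of_parts_eq hq2 hp1 hall)
        obtain ⟨j, hj⟩ := hex
        have hjlt : part q.2 j < part p.1 j := lt_of_le_of_ne (hb2 j) hj
        have hbound : j < m2 := by
          have hpos : 0 < part p.1 j := by omega
          have := (part_pos_iff hp1 j).mp hpos
          omega
        refine ofFn_append_ne_right _ _ _ _ ⟨j, hbound⟩ ?_
        have hv : ((⟨j, hbound⟩ : Fin m2) : ℕ) = j := rfl
        rw [hv]
        omega
  -- conclude
  rw [← hordq, ← hordθ]
  have hlq : (symbolOfBip δ' q (mm + 1) m2).entries.length = (mm + 1) + m2 := by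
    rw [entries_symbolOfBip]
    simp
    omega
  have hlθ : (symbolOfBip δ' (θ1, p.1) (mm + 1) m2).entries.length = (mm + 1) + m2 := by
    rw [entries_symbolOfBip]
    simp
    omega
  simp only [Symbol.ord, hlq, hlθ]
  omega
/-! ### Toolkit 10: ord comparison with θ₀, odd case -/

private lemma core_lt' {m1 k : ℕ} (gq gθ : Fin m1 → ℕ) (fq fθ : Fin (k + 1) → ℕ)
    (htail : ∀ i : Fin k, fq i.succ ≤ fθ i.succ)
    (hg : ∀ j, gq j ≤ gθ j)
    (hbig1 : ∀ i : Fin k, fθ i.succ ≤ fθ 0)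
    (hbig2 : ∀ j, gθ j ≤ fθ 0)
    (hne : (List.ofFn (fun i : Fin k => fq i.succ) ++ List.ofFn gq)
         ≠ (List.ofFn (fun i : Fin k => fθ i.succ) ++ List.ofFn gθ)) :
    pairMinSum (List.ofFn gq ++ List.ofFn fq) < pairMinSum (List.ofFn gθ ++ List.ofFn fθ) := by
  rw [pairMinSum_swap (List.ofFn gq) (List.ofFn fq),
    pairMinSum_swap (List.ofFn gθ) (List.ofFn fθ)]
  exact core_lt fq fθ gq gθ htail hg hbig1 hbig2 hne

lemma ord_lt_theta0_odd {n n' : ℕ} {δ : ℤ} {p q : Multiset ℕ × Multiset ℕ}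
    (hδ : IsAdmissible δ) (hpar : ¬ Even (n + n')) (hr : 2 * n ≤ n') (hp : p ∈ BipSet n δ)
    (hq : ThetaB n n' δ p q) (hne : q ≠ thetaBip n n' δ 0 p) :
    ordB (deltaPrime n n' δ) q < ordB (deltaPrime n n' δ) (thetaBip n n' δ 0 p) := by
  obtain ⟨hp1, hp2, hps⟩ := hp
  obtain ⟨⟨hq1, hq2, hqs⟩, hqP⟩ := hq
  obtain ⟨hF1, hF2, hF3⟩ := arith_facts n n' δ hδ hr (p.1.sum + p.2.sum) (by omega)
  rw [if_neg hpar] at hF3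
  rw [PrecCond, if_neg hpar] at hqP
  obtain ⟨hqP1, hqP2⟩ := hqP
  rw [theta0_odd hpar hp2] at hne ⊢
  set δ' := deltaPrime n n' δ with hδ'def
  set T := tauNat n n' δ with hTdef
  set θ2 := strip (T ::ₘ p.1) with hθ2
  have hθpos : ∀ x ∈ θ2, 0 < x := fun x hx => mem_strip_pos hx
  have hT1 : part p.1 0 ≤ T := by
    have ha := part_le_sum p.1 0
    omega
  have hθ20 : part θ2 0 = T := by rw [hθ2, part_strip, part_cons_zero_big _ hT1]
  have hθ2S : ∀ i, part θ2 (i + 1) = part p.1 i := fun i => by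
    rw [hθ2, part_strip, part_cons_succ_big _ hT1]
  have hb1 : ∀ i, part q.2 (i + 1) ≤ part p.1 i := by
    intro i
    by_contra hc
    push_neg at hc
    have h1 := (part_lt_iff q.2 (i + 1) (part p.1 i)).mp hc
    have h2 := transpose_part_le p.1 i
    have h3 := (hqP1 (part p.1 i)).1
    omega
  have hb2 : ∀ j, part q.1 j ≤ part p.2 j := by
    intro j
    by_contra hc
    push_neg at hc
    have h1 := (part_lt_iff q.1 j (part p.2 j)).mp hc
    have h2 := transpose_part_le p.2 j
    have h3 := (hqP2 (part p.2 j)).2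
    omega
  have hθsum : θ2.sum = T + p.1.sum := by rw [hθ2, strip_sum, Multiset.sum_cons]
  have hθS : 2 * (p.2.sum + θ2.sum) + halfTri δ' = n' := by rw [hθsum]; omega
  have hε : eps δ' ≤ 1 := by unfold eps; split <;> omega
  -- sizes
  set mm := max (max q.1.card (((q.2.card : ℤ) + δ').toNat))
    (max p.2.card (((θ2.card : ℤ) + δ').toNat)) with hmmdef
  set m2 := ((((mm + 1 : ℕ)) : ℤ) - δ').toNat with hm2def
  have hmq : max q.1.card (((q.2.card : ℤ) + δ').toNat) ≤ mm + 1 := by omega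
  have hmθ : max (p.2, θ2).1.card ((((p.2, θ2).2.card : ℤ) + δ').toNat) ≤ mm + 1 := by
    show max p.2.card (((θ2.card : ℤ) + δ').toNat) ≤ mm + 1
    omega
  have hordq := ordB_eq_symbolOfBip δ' q (mm + 1) hmq
  have hordθ := ordB_eq_symbolOfBip δ' (p.2, θ2) (mm + 1) hmθ
  rw [← hm2def] at hordq hordθ
  have hcq1 : q.1.card ≤ mm + 1 := by omega
  have hcp2 : p.2.card ≤ mm + 1 := by
    have := le_trans (le_max_left _ _) (le_max_right _ _ :
      max p.2.card (((θ2.card : ℤ) + δ').toNat) ≤ mm)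
    omega
  have htn1 : (((q.2.card : ℤ) + δ').toNat) ≤ mm := le_trans (le_max_right _ _) (le_max_left _ _)
  have htn2 : (((θ2.card : ℤ) + δ').toNat) ≤ mm := le_trans (le_max_right _ _) (le_max_right _ _)
  have hm2' : (m2 : ℤ) = ((mm + 1 : ℕ) : ℤ) - δ' := by
    rw [hm2def]
    push_cast
    omega
  have hcq2 : q.2.card ≤ m2 := by omega
  have hcθ2 : θ2.card ≤ m2 := by omega
  have hm2pos : 1 ≤ m2 := by omega
  obtain ⟨k, hk⟩ : ∃ k, m2 = k + 1 := ⟨m2 - 1, by omega⟩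
  -- the key pairMinSum comparison
  have key : pairMinSum ((symbolOfBip δ' q (mm + 1) m2).entries)
      < pairMinSum ((symbolOfBip δ' (p.2, θ2) (mm + 1) m2).entries) := by
    rw [entries_symbolOfBip, entries_symbolOfBip]
    simp only [show ((p.2, θ2).1) = p.2 from rfl, show ((p.2, θ2).2) = θ2 from rfl]
    rw [hk]
    apply core_lt'
    · intro i
      simp only [Fin.val_succ]
      have h1 := hb1 (i : ℕ)
      have h2 := hθ2S (i : ℕ)
      omega
    · intro j
      have h1 := hb2 (j : ℕ)
      omega
    · intro i
      simp only [Fin.val_succ, Fin.val_zero]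
      have h1 := hθ2S (i : ℕ)
      have h2 := part_antitone p.1 (Nat.zero_le (i : ℕ))
      have h3 := part_le_sum p.1 0
      omega
    · intro j
      simp only [Fin.val_zero]
      have h1 : part p.2 (j : ℕ) ≤ p.2.sum := part_le_sum p.2 (j : ℕ)
      rw [hθ20]
      omega
    · -- strictness witness
      by_cases hc1 : q.1 = p.2
      · have hq2ne : q.2 ≠ θ2 := by
          intro hc2
          exact hne (Prod.ext_iff.mpr ⟨hc1, hc2⟩)
        have hsq : q.2.sum = θ2.sum := by
          have h4 : q.1.sum = p.2.sum := by rw [hc1]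
          omega
        have hex : ∃ i, part q.2 (i + 1) ≠ part θ2 (i + 1) := by
          by_contra hall
          push_neg at hall
          have s1 := sum_parts q.2 (max q.2.card θ2.card + 1) (by omega)
          have s2 := sum_parts θ2 (max q.2.card θ2.card + 1) (by omega)
          rw [Finset.sum_range_succ'] at s1 s2
          have hcongr : ∑ i ∈ Finset.range (max q.2.card θ2.card), part q.2 (i + 1)
              = ∑ i ∈ Finset.range (max q.2.card θ2.card), part θ2 (i + 1) :=
            Finset.sum_congr rfl (fun i _ => hall i)
          have h0 : part q.2 0 = part θ2 0 := by omega
          refine hq2ne (eq_of_parts_eq hq2 hθpos (fun i => ?_))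
          cases i with
          | zero => exact h0
          | succ i => exact hall i
        obtain ⟨i, hi⟩ := hex
        have hilt : part q.2 (i + 1) < part θ2 (i + 1) := by
          have := hb1 i
          have := hθ2S i
          omega
        have hbound : i < k := by
          have hpos : 0 < part θ2 (i + 1) := by omega
          have := (part_pos_iff hθpos (i + 1)).mp hpos
          omega
        refine ofFn_append_ne_left _ _ _ _ ⟨i, hbound⟩ ?_
        simp only [Fin.val_succ]
        omega
      · have hex : ∃ j, part q.1 j ≠ part p.2 j := by
          by_contra hall
          push_neg at hall
          exact hc1 (eq_of_parts_eq hq1 hp2 hall)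
        obtain ⟨j, hj⟩ := hex
        have hjlt : part q.1 j < part p.2 j := lt_of_le_of_ne (hb2 j) hj
        have hbound : j < mm + 1 := by
          have hpos : 0 < part p.2 j := by omega
          have := (part_pos_iff hp2 j).mp hpos
          omega
        refine ofFn_append_ne_right _ _ _ _ ⟨j, hbound⟩ ?_
        have hv : ((⟨j, hbound⟩ : Fin (mm + 1)) : ℕ) = j := rfl
        rw [hv]
        omega
  -- conclude
  rw [← hordq, ← hordθ]
  have hlq : (symbolOfBip δ' q (mm + 1) m2).entries.length = (mm + 1) + m2 := by
    rw [entries_symbolOfBip]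
    simp
    omega
  have hlθ : (symbolOfBip δ' (p.2, θ2) (mm + 1) m2).entries.length = (mm + 1) + m2 := by
    rw [entries_symbolOfBip]
    simp
    omega
  simp only [Symbol.ord, hlq, hlθ]
  omega
/-! ### Toolkit 11: a numeric measure compatible with BLt -/

private lemma geom' (C k : ℕ) : ∑ j ∈ Finset.range k, C * (C + 1) ^ j + 1 = (C + 1) ^ k := by
  induction k with
  | zero => simp
  | succ k ih =>
    rw [Finset.sum_range_succ]
    have h1 : (C + 1) ^ (k + 1) = (C + 1) ^ k * (C + 1) := pow_succ _ _
    have h2 : (C + 1) ^ k + C * (C + 1) ^ k = (C + 1) ^ k * (C + 1) := by ring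
    omega

private def pcode (n : ℕ) (μ : Multiset ℕ) : ℕ :=
  ∑ i ∈ Finset.range n, part μ i * (n + 2) ^ (n - 1 - i)

private lemma pcode_le (n : ℕ) (μ : Multiset ℕ) (hd : ∀ i, part μ i ≤ n + 1) :
    pcode n μ + 1 ≤ (n + 2) ^ n := by
  have h1 : ∀ i ∈ Finset.range n, part μ i * (n + 2) ^ (n - 1 - i)
      ≤ (n + 1) * (n + 2) ^ (n - 1 - i) := fun i _ => Nat.mul_le_mul_right _ (hd i)
  have h2 := Finset.sum_le_sum h1
  have h3 : ∑ i ∈ Finset.range n, (n + 1) * (n + 2) ^ (n - 1 - i)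
      = ∑ i ∈ Finset.range n, (n + 1) * (n + 2) ^ i :=
    Finset.sum_range_reflect (fun j => (n + 1) * (n + 2) ^ j) n
  have h4 := geom' (n + 1) n
  simp only [show n + 1 + 1 = n + 2 from rfl] at h4
  rw [pcode]
  omega

private lemma pcode_lt_of_lex (n : ℕ) (μ ν : Multiset ℕ) (hdμ : ∀ i, part μ i ≤ n + 1)
    (i0 : ℕ) (hi0 : i0 < n)
    (hpre : ∀ j < i0, part μ j = part ν j) (hlt : part μ i0 < part ν i0) :
    pcode n μ < pcode n ν := by
  have hsplit : ∀ ξ : Multiset ℕ, pcode n ξ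
      = (∑ i ∈ Finset.range i0, part ξ i * (n + 2) ^ (n - 1 - i))
        + part ξ i0 * (n + 2) ^ (n - 1 - i0)
        + ∑ i ∈ Finset.Ico (i0 + 1) n, part ξ i * (n + 2) ^ (n - 1 - i) := by
    intro ξ
    rw [pcode]
    have h1 : ∑ i ∈ Finset.range n, part ξ i * (n + 2) ^ (n - 1 - i)
        = ∑ i ∈ Finset.range (i0 + 1), part ξ i * (n + 2) ^ (n - 1 - i)
          + ∑ i ∈ Finset.Ico (i0 + 1) n, part ξ i * (n + 2) ^ (n - 1 - i) := by
      simp only [Finset.range_eq_Ico]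
      exact (Finset.sum_Ico_consecutive _ (by omega) (by omega)).symm
    rw [h1, Finset.sum_range_succ]
  have htail : ∑ i ∈ Finset.Ico (i0 + 1) n, part μ i * (n + 2) ^ (n - 1 - i) + 1
      ≤ (n + 2) ^ (n - 1 - i0) := by
    have h1 : ∀ i ∈ Finset.Ico (i0 + 1) n, part μ i * (n + 2) ^ (n - 1 - i)
        ≤ (n + 1) * (n + 2) ^ (n - 1 - i) := fun i _ => Nat.mul_le_mul_right _ (hdμ i)
    have h2 := Finset.sum_le_sum h1
    have h3 : ∑ i ∈ Finset.Ico (i0 + 1) n, (n + 1) * (n + 2) ^ (n - 1 - i)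
        = ∑ j ∈ Finset.range (n - (i0 + 1)), (n + 1) * (n + 2) ^ (n - 1 - (i0 + 1 + j)) :=
      Finset.sum_Ico_eq_sum_range (fun i => (n + 1) * (n + 2) ^ (n - 1 - i)) (i0 + 1) n
    have h4 : ∑ j ∈ Finset.range (n - (i0 + 1)), (n + 1) * (n + 2) ^ (n - 1 - (i0 + 1 + j))
        = ∑ j ∈ Finset.range (n - 1 - i0), (n + 1) * (n + 2) ^ (n - 1 - i0 - 1 - j) := by
      apply Finset.sum_congr (by rw [show n - (i0 + 1) = n - 1 - i0 by omega])
      intro j _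
      rw [show n - 1 - (i0 + 1 + j) = n - 1 - i0 - 1 - j from by omega]
    have h5 : ∑ j ∈ Finset.range (n - 1 - i0), (n + 1) * (n + 2) ^ (n - 1 - i0 - 1 - j)
        = ∑ j ∈ Finset.range (n - 1 - i0), (n + 1) * (n + 2) ^ j :=
      Finset.sum_range_reflect (fun j => (n + 1) * (n + 2) ^ j) (n - 1 - i0)
    have h6 := geom' (n + 1) (n - 1 - i0)
    simp only [show n + 1 + 1 = n + 2 from rfl] at h6
    omega
  have hν : part μ i0 * (n + 2) ^ (n - 1 - i0) + (n + 2) ^ (n - 1 - i0)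
      ≤ part ν i0 * (n + 2) ^ (n - 1 - i0) := by
    have h := Nat.mul_le_mul_right ((n + 2) ^ (n - 1 - i0)) (show part μ i0 + 1 ≤ part ν i0 by omega)
    rw [add_mul, one_mul] at h
    exact h
  have hpresum : ∑ i ∈ Finset.range i0, part μ i * (n + 2) ^ (n - 1 - i)
      = ∑ i ∈ Finset.range i0, part ν i * (n + 2) ^ (n - 1 - i) :=
    Finset.sum_congr rfl (fun i hi => by rw [hpre i (Finset.mem_range.mp hi)])
  have h7 := hsplit μ
  have h8 := hsplit ν
  omega

private def pMeas (n : ℕ) (a b : Multiset ℕ) : ℕ :=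
  (a.sum * (n + 2) ^ n + pcode n a) * (n + 2) ^ n + pcode n b

private lemma pMeas_lt (n : ℕ) (a b a' b' : Multiset ℕ)
    (ha'pos : ∀ x ∈ a', 0 < x) (hb'pos : ∀ x ∈ b', 0 < x)
    (hsa : a.sum ≤ n) (hsa' : a'.sum ≤ n) (hsb : b.sum ≤ n) (hsb' : b'.sum ≤ n)
    (h : a.sum < a'.sum ∨ (a.sum = a'.sum ∧ PartLexLt a a') ∨ (a = a' ∧ PartLexLt b b')) :
    pMeas n a b < pMeas n a' b' := by
  have hBpos : 1 ≤ (n + 2) ^ n := Nat.one_le_pow _ _ (by omega)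
  have hda : ∀ i, part a i ≤ n + 1 := fun i => le_trans (part_le_sum a i) (by omega)
  have hdb : ∀ i, part b i ≤ n + 1 := fun i => le_trans (part_le_sum b i) (by omega)
  have hca := pcode_le n a hda
  have hcb := pcode_le n b hdb
  have hstep : ∀ X X' c c' : ℕ, X + 1 ≤ X' → c + 1 ≤ (n + 2) ^ n →
      X * (n + 2) ^ n + c < X' * (n + 2) ^ n + c' := by
    intro X X' c c' h1 h2
    have h3 : (X + 1) * (n + 2) ^ n ≤ X' * (n + 2) ^ n := Nat.mul_le_mul_right _ h1
    rw [add_mul, one_mul] at h3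
    omega
  rcases h with hs | ⟨hs, hlex⟩ | ⟨heq, hlex⟩
  · refine hstep _ _ _ _ ?_ hcb
    have h1 : (a.sum + 1) * (n + 2) ^ n ≤ a'.sum * (n + 2) ^ n :=
      Nat.mul_le_mul_right _ (by omega)
    rw [add_mul, one_mul] at h1
    omega
  · obtain ⟨i0, hpre, hlt⟩ := hlex
    have hi0 : i0 < n := by
      have hpos : 0 < part a' i0 := by omega
      have h1 := (part_pos_iff ha'pos i0).mp hpos
      have h2 := card_le_sum_of_pos ha'pos
      omega
    have hcode := pcode_lt_of_lex n a a' hda i0 hi0 hpre hlt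
    have hsum_eq : a.sum * (n + 2) ^ n = a'.sum * (n + 2) ^ n := by rw [hs]
    refine hstep _ _ _ _ (by omega) hcb
  · obtain ⟨i0, hpre, hlt⟩ := hlex
    have hi0 : i0 < n := by
      have hpos : 0 < part b' i0 := by omega
      have h1 := (part_pos_iff hb'pos i0).mp hpos
      have h2 := card_le_sum_of_pos hb'pos
      omega
    have hcode := pcode_lt_of_lex n b b' hdb i0 hi0 hpre hlt
    rw [pMeas, pMeas, heq]
    omega
/-! ### Toolkit 12: injectivity of θ₀ -/

private lemma strip_cons_pos {a : ℕ} (μ : Multiset ℕ) (ha : 0 < a) :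
    strip (a ::ₘ μ) = a ::ₘ strip μ := by
  rw [strip, Multiset.filter_cons, if_pos ha, strip, Multiset.singleton_add]

private lemma strip_cons_zero (μ : Multiset ℕ) : strip ((0 : ℕ) ::ₘ μ) = strip μ := by
  rw [strip, Multiset.filter_cons, if_neg (by omega), strip, zero_add]

lemma theta0_inj {n n' : ℕ} {δ : ℤ} {p r : Multiset ℕ × Multiset ℕ}
    (hp : p ∈ BipSet n δ) (hr : r ∈ BipSet n δ)
    (h : thetaBip n n' δ 0 p = thetaBip n n' δ 0 r) : p = r := by
  obtain ⟨hp1, hp2, _⟩ := hp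
  obtain ⟨hr1, hr2, _⟩ := hr
  by_cases hpar : Even (n + n')
  · rw [theta0_even hpar hp1, theta0_even hpar hr1] at h
    obtain ⟨h1, h2⟩ := Prod.ext_iff.mp h
    have h3 : p.2 = r.2 := by
      rcases Nat.eq_zero_or_pos (tauNat n n' δ) with hT | hT
      · rw [hT, strip_cons_zero, strip_cons_zero, strip_eq_self hp2, strip_eq_self hr2] at h1
        exact h1
      · rw [strip_cons_pos _ hT, strip_cons_pos _ hT, strip_eq_self hp2,
          strip_eq_self hr2] at h1
        exact (Multiset.cons_inj_right _).mp h1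
    exact Prod.ext_iff.mpr ⟨h2, h3⟩
  · rw [theta0_odd hpar hp2, theta0_odd hpar hr2] at h
    obtain ⟨h1, h2⟩ := Prod.ext_iff.mp h
    have h3 : p.1 = r.1 := by
      rcases Nat.eq_zero_or_pos (tauNat n n' δ) with hT | hT
      · rw [hT, strip_cons_zero, strip_cons_zero, strip_eq_self hp1, strip_eq_self hr1] at h2
        exact h2
      · rw [strip_cons_pos _ hT, strip_cons_pos _ hT, strip_eq_self hp1,
          strip_eq_self hr1] at h2
        exact (Multiset.cons_inj_right _).mp h2
    exact Prod.ext_iff.mpr ⟨h3, h1⟩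

/-- In the stable range `n ≤ ⌊n'/2⌋`, `θ̄(Λ)` is defined and equals `θ_0(Λ)` for
every `Λ ∈ S_{n,δ}`. -/
theorem statement16 (n n' : ℕ) (δ : ℤ) (hδ : IsAdmissible δ) (h : n ≤ n' / 2) :
    ∀ bar : Multiset ℕ × Multiset ℕ → Option (Multiset ℕ × Multiset ℕ),
      IsThetaBar n n' δ bar → ∀ p ∈ BipSet n δ, bar p = some (thetaBip n n' δ 0 p) := by
  intro bar hbar
  have hr2 : 2 * n ≤ n' := by omega
  obtain ⟨hnone, hspec⟩ := hbar
  -- the measure is compatible with the order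
  have hMlt : ∀ r p', r ∈ BipSet n δ → p' ∈ BipSet n δ → BLt n n' r p' →
      (if Even (n + n') then pMeas n r.1 r.2 else pMeas n r.2 r.1)
        < (if Even (n + n') then pMeas n p'.1 p'.2 else pMeas n p'.2 p'.1) := by
    intro r p' hrS hpS hlt
    obtain ⟨hr1, hr2', hrs⟩ := hrS
    obtain ⟨hp1, hp2, hps⟩ := hpS
    by_cases hpar : Even (n + n')
    · rw [BLt, if_pos hpar] at hlt
      simp only [if_pos hpar]
      exact pMeas_lt n r.1 r.2 p'.1 p'.2 hp1 hp2 (by omega) (by omega) (by omega) (by omega) hlt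
    · rw [BLt, if_neg hpar] at hlt
      simp only [if_neg hpar]
      exact pMeas_lt n r.2 r.1 p'.2 p'.1 hp2 hp1 (by omega) (by omega) (by omega) (by omega) hlt
  -- the main step
  have step : ∀ p, p ∈ BipSet n δ →
      (∀ r, r ∈ BipSet n δ → BLt n n' r p → bar r = some (thetaBip n n' δ 0 r)) →
      bar p = some (thetaBip n n' δ 0 p) := by
    intro p hp IH
    have hθmem : ThetaB n n' δ p (thetaBip n n' δ 0 p) := by
      by_cases hpar : Even (n + n')
      · exact theta0_mem_even hδ hpar hr2 hp
      · exact theta0_mem_odd hδ hpar hr2 hp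
    have hflat : InFlat n n' δ bar p (thetaBip n n' δ 0 p) := by
      refine ⟨hθmem, ?_⟩
      intro r hrS hlt hbarr
      have h1 := IH r hrS hlt
      rw [h1] at hbarr
      have h2 : thetaBip n n' δ 0 r = thetaBip n n' δ 0 p := Option.some.inj hbarr
      have h3 : r = p := theta0_inj hrS hp h2
      subst h3
      exact absurd (hMlt r r hrS hrS hlt) (lt_irrefl _)
    obtain ⟨q, hq⟩ := (hspec p hp).1 ⟨_, hflat⟩
    obtain ⟨hqflat, hqmax, _⟩ := (hspec p hp).2 q hq
    have hord1 : ordB (deltaPrime n n' δ) (thetaBip n n' δ 0 p) ≤ ordB (deltaPrime n n' δ) q :=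
      hqmax _ hflat
    by_cases hqe : q = thetaBip n n' δ 0 p
    · rw [hq, hqe]
    · exfalso
      have hthetaB : ThetaB n n' δ p q := hqflat.1
      have hlt2 : ordB (deltaPrime n n' δ) q < ordB (deltaPrime n n' δ) (thetaBip n n' δ 0 p) := by
        by_cases hpar : Even (n + n')
        · exact ord_lt_theta0_even hδ hpar hr2 hp hthetaB hqe
        · exact ord_lt_theta0_odd hδ hpar hr2 hp hthetaB hqe
      omega
  -- strong induction on the measure
  have main : ∀ N p, p ∈ BipSet n δ →
      (if Even (n + n') then pMeas n p.1 p.2 else pMeas n p.2 p.1) ≤ N →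
      bar p = some (thetaBip n n' δ 0 p) := by
    intro N
    induction N with
    | zero =>
      intro p hp hM
      exact step p hp (fun r hrS hlt => absurd (hMlt r p hrS hp hlt) (by omega))
    | succ N ih =>
      intro p hp hM
      refine step p hp (fun r hrS hlt => ih r hrS ?_)
      have := hMlt r p hrS hp hlt
      omega
  exact fun p hp => main _ p hp le_rfl

end PanUnitary
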